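/- For every player i and every coalition C containing i, δ⁻(⊵_i,C) = |C ∩ N⁻_i| + Σ_{f ∈ N⁻_i} |{b ∈ C ∩ N⁻_i : f ▷_i b}|. -/

import Mathlib

/-! Basic machinery: weak orders, linear extensions, Kendall-tau,
and the directed Hausdorff–Kendall-tau distance. -/

section Orders

variable {P : Type*}

/-- The strict part `x ▷ y` of a relation `R`. -/
def strictOf (R : P → P → Prop) (x y : P) : Prop := R x y ∧ ¬ R y x

/-- The indifference part `x ∼ y` of a relation `R`. -/
def indiffOf (R : P → P → Prop) (x y : P) : Prop := R x y ∧ R y x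

/-- `R` is a weak order (total preorder) on the finite set `S`. -/
structure IsWeakOrderOn (S : Finset P) (R : P → P → Prop) : Prop where
  refl : ∀ x ∈ S, R x x
  trans : ∀ x ∈ S, ∀ y ∈ S, ∀ z ∈ S, R x y → R y z → R x z
  total : ∀ x ∈ S, ∀ y ∈ S, R x y ∨ R y x

/-- `A` is a linear extension on `S` of the weak order `R`: a strict total
order on `S` which is consistent with the strict part of `R`. -/
structure IsLinExtOn (S : Finset P) (R : P → P → Prop) (A : P → P → Prop) : Prop where
  irrefl : ∀ x ∈ S, ¬ A x x
  trans : ∀ x ∈ S, ∀ y ∈ S, ∀ z ∈ S, A x y → A y z → A x z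
  total : ∀ x ∈ S, ∀ y ∈ S, x ≠ y → A x y ∨ A y x
  extend : ∀ x ∈ S, ∀ y ∈ S, strictOf R x y → A x y

/-- The Kendall-tau distance between two strict (linear) orders on `S`:
the number of pairs ordered oppositely by the two orders. -/
noncomputable def kendallTau (S : Finset P) (A B : P → P → Prop) : ℕ :=
  Set.ncard {p : P × P | p.1 ∈ S ∧ p.2 ∈ S ∧ A p.1 p.2 ∧ B p.2 p.1}

/-- The directed Hausdorff–Kendall-tau distance `→τ(R1,R2)` between weak orders on `S`:
the maximum over linear extensions `B` of `R2` of the minimum over linear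
extensions `A` of `R1` of `τ(A,B)`. -/
noncomputable def dirTau (S : Finset P) (R1 R2 : P → P → Prop) : ℕ :=
  sSup { n : ℕ | ∃ B : P → P → Prop, IsLinExtOn S R2 B ∧
    n = sInf { m : ℕ | ∃ A : P → P → Prop, IsLinExtOn S R1 A ∧ m = kendallTau S A B } }

/-- The (undirected) Hausdorff–Kendall-tau distance `τ*`. -/
noncomputable def hkTau (S : Finset P) (R1 R2 : P → P → Prop) : ℕ :=
  max (dirTau S R1 R2) (dirTau S R2 R1)

end Orders

/-! FEN-hedonic games with distance-based preferences. -/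

section Game

/-- A FEN preference for player `i`: disjoint sets of friends and enemies
(not containing `i`) together with weak orders on the friends and on the enemies. -/
structure FENPref (P : Type*) (i : P) where
  friends : Finset P
  enemies : Finset P
  Rp : P → P → Prop
  Rm : P → P → Prop
  disj : Disjoint friends enemies
  self_not_friend : i ∉ friends
  self_not_enemy : i ∉ enemies
  wo_p : IsWeakOrderOn friends Rp
  wo_m : IsWeakOrderOn enemies Rm

variable {P : Type*} {i : P}

/-- The weak order `⊵⁺_i` on `N⁺_i ∪ {i}`: the friends, ordered by `⊵_i`,
all strictly above `i`. -/
def FENPref.prefPlus (pr : FENPref P i) (x y : P) : Prop :=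
  (x ∈ pr.friends ∧ y ∈ pr.friends ∧ pr.Rp x y) ∨
  (x ∈ pr.friends ∧ y = i) ∨
  (x = i ∧ y = i)

/-- The weak order `⊵⁻_i` on `N⁻_i ∪ {i}`: `i` strictly above all enemies,
which are ordered by `⊵_i`. -/
def FENPref.prefMinus (pr : FENPref P i) (x y : P) : Prop :=
  (x = i ∧ y = i) ∨
  (x = i ∧ y ∈ pr.enemies) ∨
  (x ∈ pr.enemies ∧ y ∈ pr.enemies ∧ pr.Rm x y)

/-- The weak order `C⁺_i` on `N⁺_i ∪ {i}`: friends in `C` strictly above `i`,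
ordered by `⊵_i`; friends not in `C` strictly below `i`, ordered by the reverse of `⊵_i`. -/
def FENPref.coalPlus (pr : FENPref P i) (C : Finset P) (x y : P) : Prop :=
  (x ∈ pr.friends ∧ x ∈ C ∧ y ∈ pr.friends ∧ y ∈ C ∧ pr.Rp x y) ∨
  ((x ∈ pr.friends ∧ x ∈ C) ∧ (y = i ∨ (y ∈ pr.friends ∧ y ∉ C))) ∨
  (x = i ∧ (y = i ∨ (y ∈ pr.friends ∧ y ∉ C))) ∨
  (x ∈ pr.friends ∧ x ∉ C ∧ y ∈ pr.friends ∧ y ∉ C ∧ pr.Rp y x)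

/-- The weak order `C⁻_i` on `N⁻_i ∪ {i}`: enemies in `C` strictly above `i`,
ordered by the reverse of `⊵_i`; enemies not in `C` strictly below `i`, ordered by `⊵_i`. -/
def FENPref.coalMinus (pr : FENPref P i) (C : Finset P) (x y : P) : Prop :=
  (x ∈ pr.enemies ∧ x ∈ C ∧ y ∈ pr.enemies ∧ y ∈ C ∧ pr.Rm y x) ∨
  ((x ∈ pr.enemies ∧ x ∈ C) ∧ (y = i ∨ (y ∈ pr.enemies ∧ y ∉ C))) ∨
  (x = i ∧ (y = i ∨ (y ∈ pr.enemies ∧ y ∉ C))) ∨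
  (x ∈ pr.enemies ∧ x ∉ C ∧ y ∈ pr.enemies ∧ y ∉ C ∧ pr.Rm x y)

variable [DecidableEq P]

/-- `δ⁺(⊵_i, C) = →τ(⊵⁺_i, C⁺_i)`. -/
noncomputable def FENPref.deltaPlus (pr : FENPref P i) (C : Finset P) : ℕ :=
  dirTau (insert i pr.friends) pr.prefPlus (pr.coalPlus C)

/-- `δ⁻(⊵_i, C) = →τ(⊵⁻_i, C⁻_i)`. -/
noncomputable def FENPref.deltaMinus (pr : FENPref P i) (C : Finset P) : ℕ :=
  dirTau (insert i pr.enemies) pr.prefMinus (pr.coalMinus C)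

/-- `δ(⊵_i, C) = δ⁺(⊵_i, C) + δ⁻(⊵_i, C)`. -/
noncomputable def FENPref.delta (pr : FENPref P i) (C : Finset P) : ℕ :=
  pr.deltaPlus C + pr.deltaMinus C

end Game

section Aux
variable {P : Type*}

/-- Refining a weak order by a strict total order gives a linear extension. -/
def refineRel (R W : P → P → Prop) (x y : P) : Prop :=
  strictOf R x y ∨ (indiffOf R x y ∧ W x y)

theorem isLinExtOn_refine {S : Finset P} {R W : P → P → Prop}
    (hR : IsWeakOrderOn S R)
    (hWirr : ∀ x ∈ S, ¬ W x x)
    (hWtr : ∀ x ∈ S, ∀ y ∈ S, ∀ z ∈ S, W x y → W y z → W x z)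
    (hWtot : ∀ x ∈ S, ∀ y ∈ S, x ≠ y → W x y ∨ W y x) :
    IsLinExtOn S R (refineRel R W) := by
  constructor
  · intro x hx h
    rcases h with ⟨h1, h2⟩ | ⟨_, h2⟩
    · exact h2 h1
    · exact hWirr x hx h2
  · intro x hx y hy z hz hxy hyz
    rcases hxy with ⟨h1, h2⟩ | ⟨⟨h1, h1'⟩, h2⟩ <;>
      rcases hyz with ⟨g1, g2⟩ | ⟨⟨g1, g1'⟩, g2⟩
    · exact Or.inl ⟨hR.trans x hx y hy z hz h1 g1,
        fun hzx => h2 (hR.trans y hy z hz x hx g1 hzx)⟩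
    · exact Or.inl ⟨hR.trans x hx y hy z hz h1 g1,
        fun hzx => h2 (hR.trans y hy z hz x hx g1 hzx)⟩
    · exact Or.inl ⟨hR.trans x hx y hy z hz h1 g1,
        fun hzx => g2 (hR.trans z hz x hx y hy hzx h1)⟩
    · exact Or.inr ⟨⟨hR.trans x hx y hy z hz h1 g1, hR.trans z hz y hy x hx g1' h1'⟩,
        hWtr x hx y hy z hz h2 g2⟩
  · intro x hx y hy hxy
    rcases hR.total x hx y hy with h | h
    · by_cases h' : R y x
      · rcases hWtot x hx y hy hxy with w | w
        · exact Or.inl (Or.inr ⟨⟨h, h'⟩, w⟩)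
        · exact Or.inr (Or.inr ⟨⟨h', h⟩, w⟩)
      · exact Or.inl (Or.inl ⟨h, h'⟩)
    · by_cases h' : R x y
      · rcases hWtot x hx y hy hxy with w | w
        · exact Or.inl (Or.inr ⟨⟨h', h⟩, w⟩)
        · exact Or.inr (Or.inr ⟨⟨h, h'⟩, w⟩)
      · exact Or.inr (Or.inl ⟨h, h'⟩)
  · intro x _ y _ h
    exact Or.inl h

end Aux

section Aux2
variable {P : Type*} [DecidableEq P] {i : P}

theorem prefMinus_wo (pr : FENPref P i) :
    IsWeakOrderOn (insert i pr.enemies) pr.prefMinus := by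
  have hiE := pr.self_not_enemy
  constructor
  · intro x hx
    rcases Finset.mem_insert.mp hx with rfl | hxE
    · exact Or.inl ⟨rfl, rfl⟩
    · exact Or.inr (Or.inr ⟨hxE, hxE, pr.wo_m.refl x hxE⟩)
  · intro x hx y hy z hz hxy hyz
    rcases hxy with ⟨rfl, rfl⟩ | ⟨rfl, hyE⟩ | ⟨hxE, hyE, hRxy⟩
    · exact hyz
    · rcases hyz with ⟨rfl, _⟩ | ⟨rfl, _⟩ | ⟨_, hzE, _⟩
      · exact absurd hyE hiE
      · exact absurd hyE hiE
      · exact Or.inr (Or.inl ⟨rfl, hzE⟩)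
    · rcases hyz with ⟨rfl, _⟩ | ⟨rfl, _⟩ | ⟨_, hzE, hRyz⟩
      · exact absurd hyE hiE
      · exact absurd hyE hiE
      · exact Or.inr (Or.inr ⟨hxE, hzE, pr.wo_m.trans x hxE y hyE z hzE hRxy hRyz⟩)
  · intro x hx y hy
    rcases Finset.mem_insert.mp hx with rfl | hxE
    · rcases Finset.mem_insert.mp hy with rfl | hyE
      · exact Or.inl (Or.inl ⟨rfl, rfl⟩)
      · exact Or.inl (Or.inr (Or.inl ⟨rfl, hyE⟩))
    · rcases Finset.mem_insert.mp hy with rfl | hyE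
      · exact Or.inr (Or.inr (Or.inl ⟨rfl, hxE⟩))
      · rcases pr.wo_m.total x hxE y hyE with h | h
        · exact Or.inl (Or.inr (Or.inr ⟨hxE, hyE, h⟩))
        · exact Or.inr (Or.inr (Or.inr ⟨hyE, hxE, h⟩))

theorem coalMinus_wo (pr : FENPref P i) (C : Finset P) :
    IsWeakOrderOn (insert i pr.enemies) (pr.coalMinus C) := by
  have hiE := pr.self_not_enemy
  constructor
  · intro x hx
    rcases Finset.mem_insert.mp hx with rfl | hxE
    · exact Or.inr (Or.inr (Or.inl ⟨rfl, Or.inl rfl⟩))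
    · by_cases hC : x ∈ C
      · exact Or.inl ⟨hxE, hC, hxE, hC, pr.wo_m.refl x hxE⟩
      · exact Or.inr (Or.inr (Or.inr ⟨hxE, hC, hxE, hC, pr.wo_m.refl x hxE⟩))
  · intro x hx y hy z hz hxy hyz
    rcases hxy with ⟨hxE, hxC, hyE, hyC, hRyx⟩ | ⟨⟨hxE, hxC⟩, rfl | ⟨hyE, hyC⟩⟩ |
      ⟨rfl, rfl | ⟨hyE, hyC⟩⟩ | ⟨hxE, hxC, hyE, hyC, hRxy⟩
    · -- x ∈ In, y ∈ In
      rcases hyz with ⟨_, _, hzE, hzC, hRzy⟩ | ⟨_, hz⟩ | ⟨rfl, _⟩ | ⟨_, hyC', _⟩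
      · exact Or.inl ⟨hxE, hxC, hzE, hzC, pr.wo_m.trans z hzE y hyE x hxE hRzy hRyx⟩
      · exact Or.inr (Or.inl ⟨⟨hxE, hxC⟩, hz⟩)
      · exact absurd hyE hiE
      · exact absurd hyC hyC'
    · -- x ∈ In, y = i
      rcases hyz with ⟨hyE, _⟩ | ⟨⟨hyE, _⟩, _⟩ | ⟨_, hz⟩ | ⟨hyE, _⟩
      · exact absurd hyE hiE
      · exact absurd hyE hiE
      · exact Or.inr (Or.inl ⟨⟨hxE, hxC⟩, hz⟩)
      · exact absurd hyE hiE
    · -- x ∈ In, y ∈ Out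
      rcases hyz with ⟨_, hyC', _⟩ | ⟨⟨_, hyC'⟩, _⟩ | ⟨rfl, _⟩ | ⟨_, _, hzE, hzC, _⟩
      · exact absurd hyC' hyC
      · exact absurd hyC' hyC
      · exact absurd hyE hiE
      · exact Or.inr (Or.inl ⟨⟨hxE, hxC⟩, Or.inr ⟨hzE, hzC⟩⟩)
    · -- x = i, y = i
      exact hyz
    · -- x = i, y ∈ Out
      rcases hyz with ⟨_, hyC', _⟩ | ⟨⟨_, hyC'⟩, _⟩ | ⟨rfl, _⟩ | ⟨_, _, hzE, hzC, _⟩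
      · exact absurd hyC' hyC
      · exact absurd hyC' hyC
      · exact absurd hyE hiE
      · exact Or.inr (Or.inr (Or.inl ⟨rfl, Or.inr ⟨hzE, hzC⟩⟩))
    · -- x ∈ Out, y ∈ Out
      rcases hyz with ⟨_, hyC', _⟩ | ⟨⟨_, hyC'⟩, _⟩ | ⟨rfl, _⟩ | ⟨_, _, hzE, hzC, hRyz⟩
      · exact absurd hyC' hyC
      · exact absurd hyC' hyC
      · exact absurd hyE hiE
      · exact Or.inr (Or.inr (Or.inr
          ⟨hxE, hxC, hzE, hzC, pr.wo_m.trans x hxE y hyE z hzE hRxy hRyz⟩))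
  · intro x hx y hy
    rcases Finset.mem_insert.mp hx with rfl | hxE
    · rcases Finset.mem_insert.mp hy with rfl | hyE
      · exact Or.inl (Or.inr (Or.inr (Or.inl ⟨rfl, Or.inl rfl⟩)))
      · by_cases hyC : y ∈ C
        · exact Or.inr (Or.inr (Or.inl ⟨⟨hyE, hyC⟩, Or.inl rfl⟩))
        · exact Or.inl (Or.inr (Or.inr (Or.inl ⟨rfl, Or.inr ⟨hyE, hyC⟩⟩)))
    · rcases Finset.mem_insert.mp hy with rfl | hyE
      · by_cases hxC : x ∈ C
        · exact Or.inl (Or.inr (Or.inl ⟨⟨hxE, hxC⟩, Or.inl rfl⟩))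
        · exact Or.inr (Or.inr (Or.inr (Or.inl ⟨rfl, Or.inr ⟨hxE, hxC⟩⟩)))
      · by_cases hxC : x ∈ C <;> by_cases hyC : y ∈ C
        · rcases pr.wo_m.total x hxE y hyE with h | h
          · exact Or.inr (Or.inl ⟨hyE, hyC, hxE, hxC, h⟩)
          · exact Or.inl (Or.inl ⟨hxE, hxC, hyE, hyC, h⟩)
        · exact Or.inl (Or.inr (Or.inl ⟨⟨hxE, hxC⟩, Or.inr ⟨hyE, hyC⟩⟩))
        · exact Or.inr (Or.inr (Or.inl ⟨⟨hyE, hyC⟩, Or.inr ⟨hxE, hxC⟩⟩))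
        · rcases pr.wo_m.total x hxE y hyE with h | h
          · exact Or.inl (Or.inr (Or.inr (Or.inr ⟨hxE, hxC, hyE, hyC, h⟩)))
          · exact Or.inr (Or.inr (Or.inr (Or.inr ⟨hyE, hyC, hxE, hxC, h⟩)))

end Aux2

section Aux3
variable {P : Type*} [DecidableEq P] {i : P}

/-- Pairs strictly ordered by `⊵⁻` but not by `C⁻` are exactly the "forced" pairs. -/
theorem classify_pairs (pr : FENPref P i) (C : Finset P) {x y : P}
    (hpi : strictOf pr.prefMinus x y) (hsig : ¬ strictOf (pr.coalMinus C) x y) :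
    (x = i ∧ y ∈ C ∧ y ∈ pr.enemies) ∨
      (x ∈ pr.enemies ∧ (y ∈ C ∧ y ∈ pr.enemies) ∧ strictOf pr.Rm x y) := by
  have hiE := pr.self_not_enemy
  obtain ⟨h1, h2⟩ := hpi
  rcases h1 with ⟨rfl, rfl⟩ | ⟨rfl, hyE⟩ | ⟨hxE, hyE, hRxy⟩
  · exact absurd (Or.inl ⟨rfl, rfl⟩) h2
  · -- x = i, y an enemy
    by_cases hyC : y ∈ C
    · exact Or.inl ⟨rfl, hyC, hyE⟩
    · exfalso
      refine hsig ⟨Or.inr (Or.inr (Or.inl ⟨rfl, Or.inr ⟨hyE, hyC⟩⟩)), ?_⟩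
      rintro (⟨_, _, hiE', _⟩ | ⟨⟨_, hyC'⟩, _⟩ | ⟨rfl, _⟩ | ⟨_, _, hiE', _⟩)
      · exact hiE hiE'
      · exact hyC hyC'
      · exact hiE hyE
      · exact hiE hiE'
  · -- x, y enemies, Rm x y
    have hnRyx : ¬ pr.Rm y x := fun h => h2 (Or.inr (Or.inr ⟨hyE, hxE, h⟩))
    by_cases hyC : y ∈ C
    · exact Or.inr ⟨hxE, ⟨hyC, hyE⟩, hRxy, hnRyx⟩
    · exfalso
      by_cases hxC : x ∈ C
      · refine hsig ⟨Or.inr (Or.inl ⟨⟨hxE, hxC⟩, Or.inr ⟨hyE, hyC⟩⟩), ?_⟩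
        rintro (⟨_, hyC', _⟩ | ⟨⟨_, hyC'⟩, _⟩ | ⟨rfl, _⟩ | ⟨_, _, _, hxC', _⟩)
        · exact hyC hyC'
        · exact hyC hyC'
        · exact hiE hyE
        · exact hxC' hxC
      · refine hsig ⟨Or.inr (Or.inr (Or.inr ⟨hxE, hxC, hyE, hyC, hRxy⟩)), ?_⟩
        rintro (⟨_, hyC', _⟩ | ⟨⟨_, hyC'⟩, _⟩ | ⟨rfl, _⟩ | ⟨_, _, _, _, hRyx⟩)
        · exact hyC hyC'
        · exact hyC hyC'
        · exact hiE hyE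
        · exact hnRyx hRyx

/-- The forced pairs are strictly ordered by `⊵⁻` one way and by `C⁻` the other way. -/
theorem forced_pairs (pr : FENPref P i) (C : Finset P) {x y : P}
    (h : (x = i ∧ y ∈ C ∧ y ∈ pr.enemies) ∨
      (x ∈ pr.enemies ∧ (y ∈ C ∧ y ∈ pr.enemies) ∧ strictOf pr.Rm x y)) :
    strictOf pr.prefMinus x y ∧ strictOf (pr.coalMinus C) y x := by
  have hiE := pr.self_not_enemy
  rcases h with ⟨rfl, hyC, hyE⟩ | ⟨hxE, ⟨hyC, hyE⟩, hRxy, hnRyx⟩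
  · constructor
    · refine ⟨Or.inr (Or.inl ⟨rfl, hyE⟩), ?_⟩
      rintro (⟨rfl, _⟩ | ⟨rfl, hiE'⟩ | ⟨_, hiE', _⟩)
      · exact hiE hyE
      · exact hiE hiE'
      · exact hiE hiE'
    · refine ⟨Or.inr (Or.inl ⟨⟨hyE, hyC⟩, Or.inl rfl⟩), ?_⟩
      rintro (⟨hiE', _⟩ | ⟨⟨hiE', _⟩, _⟩ | ⟨_, rfl | ⟨_, hyC'⟩⟩ | ⟨hiE', _⟩)
      · exact hiE hiE'
      · exact hiE hiE'
      · exact hiE hyE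
      · exact hyC' hyC
      · exact hiE hiE'
  · constructor
    · refine ⟨Or.inr (Or.inr ⟨hxE, hyE, hRxy⟩), ?_⟩
      rintro (⟨rfl, _⟩ | ⟨rfl, _⟩ | ⟨_, _, hRyx⟩)
      · exact hiE hyE
      · exact hiE hyE
      · exact hnRyx hRyx
    · by_cases hxC : x ∈ C
      · refine ⟨Or.inl ⟨hyE, hyC, hxE, hxC, hRxy⟩, ?_⟩
        rintro (⟨_, _, _, _, hRyx⟩ | ⟨_, rfl | ⟨_, hyC'⟩⟩ | ⟨rfl, _⟩ | ⟨_, hxC', _⟩)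
        · exact hnRyx hRyx
        · exact hiE hyE
        · exact hyC' hyC
        · exact hiE hxE
        · exact hxC' hxC
      · refine ⟨Or.inr (Or.inl ⟨⟨hyE, hyC⟩, Or.inr ⟨hxE, hxC⟩⟩), ?_⟩
        rintro (⟨_, hxC', _⟩ | ⟨⟨_, hxC'⟩, _⟩ | ⟨rfl, _⟩ | ⟨_, _, _, hyC', _⟩)
        · exact hxC hxC'
        · exact hxC hxC'
        · exact hiE hxE
        · exact hyC' hyC

end Aux3

/-- Characterization of `δ⁻`: for every player `i` and coalition `C` containing `i`,
`δ⁻(⊵_i,C) = |C ∩ N⁻_i| + Σ_{f ∈ N⁻_i} |{b ∈ C ∩ N⁻_i : f ▷_i b}|`. -/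
theorem deltaMinus_char {P : Type*} [DecidableEq P] {i : P} (pr : FENPref P i)
    (C : Finset P) (hiC : i ∈ C) :
    pr.deltaMinus C =
      (C ∩ pr.enemies).card +
        ∑ f ∈ pr.enemies, Set.ncard {b : P | b ∈ C ∩ pr.enemies ∧ strictOf pr.Rm f b} := by
  classical
  have hiE := pr.self_not_enemy
  set S : Finset P := insert i pr.enemies with hS
  set π : P → P → Prop := pr.prefMinus with hπdef
  set σ : P → P → Prop := pr.coalMinus C with hσdef
  have hπ : IsWeakOrderOn S π := prefMinus_wo pr
  have hσ : IsWeakOrderOn S σ := coalMinus_wo pr C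
  set Ffin : Finset (P × P) :=
    (S ×ˢ (C ∩ pr.enemies)).filter
      (fun p => p.1 = i ∨ (p.1 ∈ pr.enemies ∧ strictOf pr.Rm p.1 p.2)) with hFfin
  have hF : ∀ p : P × P, p ∈ Ffin ↔
      ((p.1 = i ∧ p.2 ∈ C ∧ p.2 ∈ pr.enemies) ∨
        (p.1 ∈ pr.enemies ∧ (p.2 ∈ C ∧ p.2 ∈ pr.enemies) ∧ strictOf pr.Rm p.1 p.2)) := by
    intro p
    rw [hFfin, Finset.mem_filter, Finset.mem_product, Finset.mem_inter, hS,
      Finset.mem_insert]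
    tauto
  -- the forced pairs lie in every Kendall-tau discordance set
  have hsub : ∀ A B : P → P → Prop, IsLinExtOn S π A → IsLinExtOn S σ B →
      (↑Ffin : Set (P × P)) ⊆ {p : P × P | p.1 ∈ S ∧ p.2 ∈ S ∧ A p.1 p.2 ∧ B p.2 p.1} := by
    intro A B hA hB p hp
    rw [Finset.mem_coe, hF] at hp
    have hx1 : p.1 ∈ S := by
      rcases hp with ⟨h, _⟩ | ⟨h, _⟩
      · rw [h]; exact Finset.mem_insert_self _ _
      · exact Finset.mem_insert_of_mem h
    have hy1 : p.2 ∈ S := by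
      rcases hp with ⟨_, _, h⟩ | ⟨_, ⟨_, h⟩, _⟩ <;> exact Finset.mem_insert_of_mem h
    obtain ⟨hπs, hσs⟩ := forced_pairs pr C hp
    exact ⟨hx1, hy1, hA.extend _ hx1 _ hy1 hπs, hB.extend _ hy1 _ hx1 hσs⟩
  -- lower bound for every pair of extensions
  have hlow : ∀ A B : P → P → Prop, IsLinExtOn S π A → IsLinExtOn S σ B →
      Ffin.card ≤ kendallTau S A B := by
    intro A B hA hB
    rw [kendallTau, ← Set.ncard_coe_finset]
    refine Set.ncard_le_ncard (hsub A B hA hB) ?_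
    refine Set.Finite.subset (S ×ˢ S).finite_toSet ?_
    rintro p ⟨h1, h2, _⟩
    rw [Finset.mem_coe, Finset.mem_product]
    exact ⟨h1, h2⟩
  -- for every extension B of σ, the mirror extension achieves the bound
  have hinner : ∀ B : P → P → Prop, IsLinExtOn S σ B →
      sInf {m : ℕ | ∃ A : P → P → Prop, IsLinExtOn S π A ∧ m = kendallTau S A B}
        = Ffin.card := by
    intro B hB
    have hA : IsLinExtOn S π (refineRel π B) :=
      isLinExtOn_refine hπ hB.irrefl hB.trans hB.total
    have hasym : ∀ x ∈ S, ∀ y ∈ S, B x y → ¬ B y x := fun x hx y hy h h' =>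
      hB.irrefl x hx (hB.trans x hx y hy x hx h h')
    have hDeq : {p : P × P | p.1 ∈ S ∧ p.2 ∈ S ∧ refineRel π B p.1 p.2 ∧ B p.2 p.1}
        = (↑Ffin : Set (P × P)) := by
      refine Set.Subset.antisymm ?_ (hsub _ B hA hB)
      rintro ⟨x, y⟩ ⟨hxS, hyS, hAxy, hByx⟩
      have hBnxy : ¬ B x y := fun h => hasym x hxS y hyS h hByx
      have hπs : strictOf π x y := hAxy.resolve_right (fun h => hBnxy h.2)
      have hσn : ¬ strictOf σ x y := fun hs => hBnxy (hB.extend x hxS y hyS hs)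
      exact Finset.mem_coe.mpr ((hF _).mpr (classify_pairs pr C hπs hσn))
    have hKmem : Ffin.card ∈
        {m : ℕ | ∃ A : P → P → Prop, IsLinExtOn S π A ∧ m = kendallTau S A B} := by
      refine ⟨refineRel π B, hA, ?_⟩
      rw [kendallTau, hDeq, Set.ncard_coe_finset]
    refine le_antisymm (Nat.sInf_le hKmem) (le_csInf ⟨_, hKmem⟩ ?_)
    rintro m ⟨A', hA', rfl⟩
    exact hlow A' B hA' hB
  -- existence of an extension of σ
  have hW : IsWellOrder P WellOrderingRel := WellOrderingRel.isWellOrder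
  have hB0 : IsLinExtOn S σ (refineRel σ WellOrderingRel) := by
    refine isLinExtOn_refine hσ (fun x _ => irrefl x) (fun x _ y _ z _ => trans_of _)
      (fun x _ y _ hxy => ?_)
    rcases trichotomous_of WellOrderingRel x y with h | h | h
    · exact Or.inl h
    · exact absurd h hxy
    · exact Or.inr h
  -- δ⁻ = |Ffin|
  have hdelta : pr.deltaMinus C = Ffin.card := by
    have hset : {n : ℕ | ∃ B : P → P → Prop, IsLinExtOn S σ B ∧
        n = sInf {m : ℕ | ∃ A : P → P → Prop, IsLinExtOn S π A ∧ m = kendallTau S A B}}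
        = {Ffin.card} := by
      ext n
      simp only [Set.mem_setOf_eq, Set.mem_singleton_iff]
      constructor
      · rintro ⟨B, hB, rfl⟩
        exact hinner B hB
      · rintro rfl
        exact ⟨refineRel σ WellOrderingRel, hB0, (hinner _ hB0).symm⟩
    show dirTau S π σ = Ffin.card
    rw [dirTau, hset, csSup_singleton]
  rw [hdelta]
  -- counting |Ffin|
  have hG : Ffin = S.biUnion (fun x => ((C ∩ pr.enemies).filter
      (fun b => x = i ∨ (x ∈ pr.enemies ∧ strictOf pr.Rm x b))).image (fun b => (x, b))) := by
    ext ⟨x, y⟩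
    rw [hFfin]
    simp only [Finset.mem_filter, Finset.mem_product, Finset.mem_biUnion, Finset.mem_image,
      Prod.mk.injEq]
    constructor
    · rintro ⟨⟨hxS, hyCE⟩, hcond⟩
      exact ⟨x, hxS, y, ⟨hyCE, hcond⟩, rfl, rfl⟩
    · rintro ⟨a, haS, b, ⟨h1, h2⟩, rfl, rfl⟩
      exact ⟨⟨haS, h1⟩, h2⟩
  rw [hG, Finset.card_biUnion]
  · rw [hS, Finset.sum_insert hiE]
    congr 1
    · rw [Finset.card_image_of_injective _ (fun a b h => (Prod.mk.injEq _ _ _ _).mp h |>.2),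
        Finset.filter_true_of_mem (fun b _ => Or.inl rfl)]
    · refine Finset.sum_congr rfl (fun f hf => ?_)
      rw [Finset.card_image_of_injective _ (fun a b h => (Prod.mk.injEq _ _ _ _).mp h |>.2)]
      rw [← Set.ncard_coe_finset]
      congr 1
      ext b
      simp only [Finset.coe_filter, Set.mem_setOf_eq, Finset.mem_inter]
      constructor
      · rintro ⟨⟨h1, h2⟩, h3 | ⟨_, h3⟩⟩
        · exact absurd (h3 ▸ hf) hiE
        · exact ⟨⟨h1, h2⟩, h3⟩
      · rintro ⟨⟨h1a, h1b⟩, h2⟩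
        exact ⟨⟨h1a, h1b⟩, Or.inr ⟨hf, h2⟩⟩
  · intro x _ y _ hxy
    rw [Function.onFun, Finset.disjoint_left]
    intro p hpx hpy
    obtain ⟨b1, _, h1⟩ := Finset.mem_image.mp hpx
    obtain ⟨b2, _, h2⟩ := Finset.mem_image.mp hpy
    exact hxy (congrArg Prod.fst (h1.trans h2.symm))
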